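/- Let G be an N×N complex Hermitian matrix, let φ₀ ∈ ℂ^N, let 𝒩 > 0, and suppose G^(s+1) applied to φ₀ is nonzero for all s. Define the normalized iterates φ(s) = G^s φ₀ / ‖G^s φ₀‖ and the success probabilities P(s+1) = ‖G φ(s)‖² / 𝒩². Then P is nondecreasing: P(s+1) ≤ P(s+2) for all s ≥ 0. -/

import Mathlib

open scoped InnerProductSpace

/-- Lemma 1: the success probability `P(s+1) = ‖G φ(s)‖²/𝒩²` of the iterative
algorithm with Hermitian gradient matrix `G` is nondecreasing in `s`. -/
theorem stmt_6 (N : ℕ) (G : Matrix (Fin N) (Fin N) ℂ) (hG : G.IsHermitian)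
    (φ₀ : EuclideanSpace ℂ (Fin N)) (𝒩 : ℝ) (h𝒩 : 0 < 𝒩)
    (hnz : ∀ s : ℕ, Matrix.toEuclideanLin (G ^ (s + 1)) φ₀ ≠ 0)
    (φ : ℕ → EuclideanSpace ℂ (Fin N))
    (hφ : ∀ s : ℕ, φ s = ‖Matrix.toEuclideanLin (G ^ s) φ₀‖⁻¹ •
      Matrix.toEuclideanLin (G ^ s) φ₀)
    (P : ℕ → ℝ)
    (hP : ∀ s : ℕ, P (s + 1) = ‖Matrix.toEuclideanLin G (φ s)‖ ^ 2 / 𝒩 ^ 2) :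
    ∀ s : ℕ, P (s + 1) ≤ P (s + 2) := by
  intro s
  set L := Matrix.toEuclideanLin G with hL
  set v : ℕ → EuclideanSpace ℂ (Fin N) := fun s => Matrix.toEuclideanLin (G ^ s) φ₀ with hv
  have hsym : L.IsSymmetric := Matrix.isHermitian_iff_isSymmetric.mp hG
  have hstep : ∀ t, v (t + 1) = L (v t) := by
    intro t
    simp only [hv, hL, pow_succ']
    rw [Matrix.toEuclideanLin_apply, Matrix.toEuclideanLin_apply, Matrix.toEuclideanLin_apply]
    simp [Matrix.mulVec_mulVec]
  -- norms
  have hvnz : ∀ t, v t ≠ 0 := by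
    intro t
    cases t with
    | zero =>
      intro h0
      apply hnz 0
      have h1 : v 1 = L (v 0) := hstep 0
      rw [h0, map_zero] at h1
      exact h1
    | succ t => exact hnz t
  have hpos : ∀ t, (0:ℝ) < ‖v t‖ := fun t => norm_pos_iff.mpr (hvnz t)
  -- key: ‖v (s+1)‖^2 ≤ ‖v s‖ * ‖v (s+2)‖
  have hkey : ‖v (s+1)‖ ^ 2 ≤ ‖v s‖ * ‖v (s+2)‖ := by
    have h1 : (‖v (s+1)‖ : ℝ) ^ 2 = Complex.re ⟪v s, v (s+2)⟫_ℂ := by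
      rw [hstep (s+1), hstep s, ← hsym (v s) (L (v s))]
      rw [← hstep s]
      simpa using (inner_self_eq_norm_sq (𝕜 := ℂ) (v (s+1))).symm
    calc ‖v (s+1)‖ ^ 2 = Complex.re ⟪v s, v (s+2)⟫_ℂ := h1
      _ ≤ ‖⟪v s, v (s+2)⟫_ℂ‖ := Complex.re_le_norm _
      _ ≤ ‖v s‖ * ‖v (s+2)‖ := norm_inner_le_norm _ _
  -- express P
  have hPexp : ∀ t, P (t+1) = (‖v (t+1)‖ / ‖v t‖) ^ 2 / 𝒩 ^ 2 := by
    intro t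
    rw [hP t, hφ t]
    rw [LinearMap.map_smul_of_tower]
    rw [norm_smul]
    rw [← hstep t]
    rw [show Matrix.toEuclideanLin (G ^ t) φ₀ = v t from rfl]
    simp [div_eq_inv_mul, abs_of_pos (inv_pos.mpr (hpos t))]
  rw [hPexp s, hPexp (s+1)]
  apply div_le_div_of_nonneg_right _ (by positivity)
  apply pow_le_pow_left₀ (by positivity)
  rw [div_le_div_iff₀ (hpos s) (hpos (s+1))]
  calc ‖v (s+1)‖ * ‖v (s+1)‖ = ‖v (s+1)‖ ^ 2 := (sq _).symm
    _ ≤ ‖v s‖ * ‖v (s+2)‖ := hkey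
    _ = ‖v (s+1+1)‖ * ‖v s‖ := by ring
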